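/- Let p ≥ 1 and let J = J({a_k},{b_k}) be a self-adjoint Jacobi matrix (a_k > 0, b_k ∈ ℝ, a_k → 1, b_k → 0). Then every eigenvalue λ(J) of J satisfies, for each choice of sign ±, (λ(J) ∓ 2)_±^p ≤ 3^{p−1} · Σ_{k=1}^∞ ( (b_k)_±^p + 2|a_k − 1|^p ). -/

import Mathlib

/- Golinskii–Kupin, inequality (20): for a self-adjoint Jacobi matrix J and any
   eigenvalue λ(J), for each sign ±,
   (λ(J) ∓ 2)_±^p ≤ 3^{p−1} Σ_k ((b_k)_±^p + 2|a_k − 1|^p). -/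

open scoped ENNReal

noncomputable section

/-- The Hilbert space ℓ²(ℕ). -/
abbrev l2 : Type := lp (fun _ : ℕ => ℂ) 2

/-- `z` is an eigenvalue of `T`. -/
def HasEigen (T : l2 →L[ℂ] l2) (z : ℂ) : Prop := ∃ u : l2, u ≠ 0 ∧ T u = z • u

/-- `J` is the complex Jacobi matrix with off-diagonal entries `a` and diagonal
entries `b` (`a 0 = a₁, b 0 = b₁`, etc.). -/
def IsJacobi (J : l2 →L[ℂ] l2) (a b : ℕ → ℂ) : Prop :=
  ∀ u : l2, ∀ k : ℕ,
    (J u : ∀ _ : ℕ, ℂ) k =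
      (if k = 0 then 0 else a (k - 1) * (u : ∀ _ : ℕ, ℂ) (k - 1))
      + b k * (u : ∀ _ : ℕ, ℂ) k + a k * (u : ∀ _ : ℕ, ℂ) (k + 1)

/-- Three-term power mean inequality for real exponents `p ≥ 1`. -/
lemma three_term_rpow {p x y z : ℝ} (hp : 1 ≤ p) (hx : 0 ≤ x) (hy : 0 ≤ y) (hz : 0 ≤ z) :
    (x + y + z) ^ p ≤ 3 ^ (p - 1) * (x ^ p + y ^ p + z ^ p) := by
  have key := Real.rpow_arith_mean_le_arith_mean_rpow (Finset.univ : Finset (Fin 3))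
    (fun _ => (3:ℝ)⁻¹) ![x, y, z] (fun i _ => by norm_num)
    (by simp [Fin.sum_univ_three]) (fun i _ => by fin_cases i <;> simpa) hp
  simp only [Fin.sum_univ_three] at key
  have h3 : (0:ℝ) < 3 := by norm_num
  have e1 : x + y + z = 3 * ((3:ℝ)⁻¹ * x + 3⁻¹ * y + 3⁻¹ * z) := by ring
  have e2 : ((3:ℝ) * ((3:ℝ)⁻¹ * x + 3⁻¹ * y + 3⁻¹ * z)) ^ p
      = 3 ^ p * ((3:ℝ)⁻¹ * x + 3⁻¹ * y + 3⁻¹ * z) ^ p :=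
    Real.mul_rpow (by norm_num) (by positivity)
  rw [e1, e2]
  calc 3 ^ p * ((3:ℝ)⁻¹ * x + 3⁻¹ * y + 3⁻¹ * z) ^ p
      ≤ 3 ^ p * ((3:ℝ)⁻¹ * x ^ p + 3⁻¹ * y ^ p + 3⁻¹ * z ^ p) := by
        apply mul_le_mul_of_nonneg_left _ (by positivity)
        simpa [Matrix.cons_val_zero, Matrix.cons_val_one] using key
    _ = 3 ^ (p - 1) * (x ^ p + y ^ p + z ^ p) := by
        rw [Real.rpow_sub h3, Real.rpow_one]; ring

/-- The key abstract estimate: if `c ≤ A n + B m + B n` with everything nonnegative,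
then `c^p` is dominated by `3^{p-1}` times the `ℓ^p`-type sum. -/
lemma key_estimate (p : ℝ) (hp : 1 ≤ p) (A B : ℕ → ℝ) (hA : ∀ k, 0 ≤ A k)
    (hB : ∀ k, 0 ≤ B k) (c : ℝ) (hc : 0 ≤ c) (n m : ℕ) (h : c ≤ A n + B m + B n) :
    ENNReal.ofReal (c ^ p) ≤ ENNReal.ofReal ((3:ℝ) ^ (p - 1)) *
      ∑' k : ℕ, (ENNReal.ofReal (A k ^ p) + 2 * ENNReal.ofReal (B k ^ p)) := by
  have hp0 : 0 ≤ p := le_trans zero_le_one hp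
  have h1 : c ^ p ≤ (A n + B m + B n) ^ p := Real.rpow_le_rpow hc h hp0
  have h2 : (A n + B m + B n) ^ p ≤ 3 ^ (p - 1) * (A n ^ p + B m ^ p + B n ^ p) :=
    three_term_rpow hp (hA n) (hB m) (hB n)
  have h3 : ENNReal.ofReal (c ^ p)
      ≤ ENNReal.ofReal ((3:ℝ) ^ (p - 1)) *
        (ENNReal.ofReal (A n ^ p) + ENNReal.ofReal (B m ^ p) + ENNReal.ofReal (B n ^ p)) := by
    rw [← ENNReal.ofReal_add (Real.rpow_nonneg (hA n) p) (Real.rpow_nonneg (hB m) p),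
      ← ENNReal.ofReal_add (add_nonneg (Real.rpow_nonneg (hA n) p) (Real.rpow_nonneg (hB m) p))
        (Real.rpow_nonneg (hB n) p),
      ← ENNReal.ofReal_mul (by positivity)]
    exact ENNReal.ofReal_le_ofReal (le_trans h1 h2)
  refine le_trans h3 (mul_le_mul_right ?_ _)
  have hsplit : (∑' k : ℕ, (ENNReal.ofReal (A k ^ p) + 2 * ENNReal.ofReal (B k ^ p)))
      = (∑' k : ℕ, ENNReal.ofReal (A k ^ p)) + 2 * ∑' k : ℕ, ENNReal.ofReal (B k ^ p) := by
    rw [ENNReal.tsum_add, ENNReal.tsum_mul_left]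
  rw [hsplit, two_mul]
  have hAle : ENNReal.ofReal (A n ^ p) ≤ ∑' k : ℕ, ENNReal.ofReal (A k ^ p) :=
    ENNReal.le_tsum n
  have hBm : ENNReal.ofReal (B m ^ p) ≤ ∑' k : ℕ, ENNReal.ofReal (B k ^ p) :=
    ENNReal.le_tsum m
  have hBn : ENNReal.ofReal (B n ^ p) ≤ ∑' k : ℕ, ENNReal.ofReal (B k ^ p) :=
    ENNReal.le_tsum n
  calc ENNReal.ofReal (A n ^ p) + ENNReal.ofReal (B m ^ p) + ENNReal.ofReal (B n ^ p)
      ≤ (∑' k : ℕ, ENNReal.ofReal (A k ^ p)) + (∑' k : ℕ, ENNReal.ofReal (B k ^ p))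
        + ∑' k : ℕ, ENNReal.ofReal (B k ^ p) :=
        add_le_add (add_le_add hAle hBm) hBn
    _ = (∑' k : ℕ, ENNReal.ofReal (A k ^ p)) +
        ((∑' k : ℕ, ENNReal.ofReal (B k ^ p)) + ∑' k : ℕ, ENNReal.ofReal (B k ^ p)) := by
        rw [add_assoc]

theorem single_eigenvalue_selfadjoint_large_coupling
    (a b : ℕ → ℝ) (hapos : ∀ k, 0 < a k)
    (ha : Filter.Tendsto a Filter.atTop (nhds 1))
    (hb : Filter.Tendsto b Filter.atTop (nhds 0))
    (J : l2 →L[ℂ] l2)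
    (hJ : IsJacobi J (fun k => ((a k : ℝ) : ℂ)) (fun k => ((b k : ℝ) : ℂ)))
    (p : ℝ) (hp : 1 ≤ p)
    (lam : ℝ) (hlam : HasEigen J ((lam : ℝ) : ℂ)) :
    (ENNReal.ofReal ((max (lam - 2) 0) ^ p)
      ≤ ENNReal.ofReal ((3:ℝ) ^ (p - 1)) *
        ∑' k : ℕ, (ENNReal.ofReal ((max (b k) 0) ^ p)
          + 2 * ENNReal.ofReal (|a k - 1| ^ p)))
    ∧ (ENNReal.ofReal ((max (-(lam + 2)) 0) ^ p)
      ≤ ENNReal.ofReal ((3:ℝ) ^ (p - 1)) *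
        ∑' k : ℕ, (ENNReal.ofReal ((max (-(b k)) 0) ^ p)
          + 2 * ENNReal.ofReal (|a k - 1| ^ p))) := by
  obtain ⟨u, hu0, huJ⟩ := hlam
  set f : ℕ → ℝ := fun k => ‖(u : ∀ _ : ℕ, ℂ) k‖ with hf
  -- a nonzero coordinate
  have hexm : ∃ m : ℕ, (u : ∀ _ : ℕ, ℂ) m ≠ 0 := by
    by_contra hcon
    push_neg at hcon
    apply hu0
    ext k
    simpa using hcon k
  obtain ⟨m₀, hm₀⟩ := hexm
  have hfm₀ : 0 < f m₀ := norm_pos_iff.mpr hm₀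
  -- coordinates tend to zero along cofinite
  have hsum : Summable fun k => f k ^ (2 : ℝ) := by
    have := (lp.memℓp u).summable (p := 2) (by norm_num)
    simpa using this
  have htend : Filter.Tendsto (fun k => f k ^ (2:ℝ)) Filter.cofinite (nhds 0) :=
    hsum.tendsto_cofinite_zero
  -- the set of coordinates at least as large as f m₀ is finite
  have hSfin : {k : ℕ | f m₀ ^ (2:ℝ) ≤ f k ^ (2:ℝ)}.Finite := by
    have hev : ∀ᶠ k in Filter.cofinite, f k ^ (2:ℝ) < f m₀ ^ (2:ℝ) := by
      have : 0 < f m₀ ^ (2:ℝ) := Real.rpow_pos_of_pos hfm₀ 2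
      exact htend (Iio_mem_nhds this)
    have := Filter.eventually_cofinite.mp hev
    refine this.subset ?_
    intro k hk
    simp only [Set.mem_setOf_eq] at hk ⊢
    exact not_lt.mpr hk
  have hSne : m₀ ∈ {k : ℕ | f m₀ ^ (2:ℝ) ≤ f k ^ (2:ℝ)} := by
    simp only [Set.mem_setOf_eq]; exact le_refl _
  obtain ⟨n, hnS, hnmax⟩ := Set.Finite.exists_maximalFor (fun k => f k ^ (2:ℝ)) _
    hSfin ⟨m₀, hSne⟩
  -- n is a global argmax of f
  have hfmax : ∀ k, f k ≤ f n := by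
    intro k
    have h2 : f k ^ (2:ℝ) ≤ f n ^ (2:ℝ) := by
      by_cases hk : k ∈ {k : ℕ | f m₀ ^ (2:ℝ) ≤ f k ^ (2:ℝ)}
      · by_contra hlt
        push_neg at hlt
        exact absurd (hnmax hk hlt.le) (not_le.mpr hlt)
      · simp only [Set.mem_setOf_eq, not_le] at hk
        exact le_trans hk.le hnS
    have hfk : 0 ≤ f k := norm_nonneg _
    have hfn : 0 ≤ f n := norm_nonneg _
    by_contra hlt
    push_neg at hlt
    exact absurd h2 (not_le.mpr (Real.rpow_lt_rpow hfn hlt (by norm_num)))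
  have hfn_pos : 0 < f n := lt_of_lt_of_le hfm₀ (hfmax m₀)
  -- the eigenvalue equation at coordinate n
  have heq : ((lam : ℂ) - (b n : ℂ)) * (u : ∀ _ : ℕ, ℂ) n
      = (if n = 0 then 0 else ((a (n-1) : ℝ) : ℂ) * (u : ∀ _ : ℕ, ℂ) (n - 1))
        + ((a n : ℝ) : ℂ) * (u : ∀ _ : ℕ, ℂ) (n + 1) := by
    have h1 := hJ u n
    have h2 : (J u : ∀ _ : ℕ, ℂ) n = (lam : ℂ) * (u : ∀ _ : ℕ, ℂ) n := by
      rw [huJ, lp.coeFn_smul]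
      simp
    rw [h2] at h1
    linear_combination h1
  -- the Gershgorin bound
  have hbound : |lam - b n| ≤ a (n - 1) + a n := by
    have hn1 : ‖((lam : ℂ) - (b n : ℂ)) * (u : ∀ _ : ℕ, ℂ) n‖ = |lam - b n| * f n := by
      rw [norm_mul]
      congr 1
      rw [← Complex.ofReal_sub, Complex.norm_real, Real.norm_eq_abs]
    have hn2 : ‖(if n = 0 then (0:ℂ) else ((a (n-1) : ℝ) : ℂ) * (u : ∀ _ : ℕ, ℂ) (n - 1))
        + ((a n : ℝ) : ℂ) * (u : ∀ _ : ℕ, ℂ) (n + 1)‖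
        ≤ a (n - 1) * f n + a n * f n := by
      refine le_trans (norm_add_le _ _) (add_le_add ?_ ?_)
      · by_cases h0 : n = 0
        · simp only [h0, if_pos]
          simp only [norm_zero]
          exact mul_nonneg (hapos _).le (norm_nonneg _)
        · simp only [h0, if_neg, not_false_iff]
          rw [norm_mul, Complex.norm_real, Real.norm_eq_abs, abs_of_pos (hapos _)]
          exact mul_le_mul_of_nonneg_left (hfmax _) (hapos _).le
      · rw [norm_mul, Complex.norm_real, Real.norm_eq_abs, abs_of_pos (hapos _)]
        exact mul_le_mul_of_nonneg_left (hfmax _) (hapos _).le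
    have : |lam - b n| * f n ≤ (a (n - 1) + a n) * f n := by
      rw [← hn1]
      calc ‖((lam : ℂ) - (b n : ℂ)) * (u : ∀ _ : ℕ, ℂ) n‖
          ≤ a (n - 1) * f n + a n * f n := by rw [heq]; exact hn2
        _ = (a (n - 1) + a n) * f n := by ring
    exact le_of_mul_le_mul_right this hfn_pos
  -- turn into the two one-sided linear bounds
  have habs1 : a (n - 1) - 1 ≤ |a (n - 1) - 1| := le_abs_self _
  have habs2 : a n - 1 ≤ |a n - 1| := le_abs_self _
  constructor
  · refine key_estimate p hp (fun k => max (b k) 0) (fun k => |a k - 1|)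
      (fun k => le_max_right _ _) (fun k => abs_nonneg _) _ (le_max_right _ _) n (n - 1) ?_
    have h1 : lam - b n ≤ a (n - 1) + a n := le_trans (le_abs_self _) hbound
    have h2 : lam - 2 ≤ b n + |a (n - 1) - 1| + |a n - 1| := by nlinarith
    rcases le_or_gt (lam - 2) 0 with h | h
    · rw [max_eq_right h]
      positivity
    · rw [max_eq_left h.le]
      calc lam - 2 ≤ b n + |a (n - 1) - 1| + |a n - 1| := h2
        _ ≤ max (b n) 0 + |a (n - 1) - 1| + |a n - 1| := by
            gcongr; exact le_max_left _ _
  · refine key_estimate p hp (fun k => max (-(b k)) 0) (fun k => |a k - 1|)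
      (fun k => le_max_right _ _) (fun k => abs_nonneg _) _ (le_max_right _ _) n (n - 1) ?_
    have h1 : b n - lam ≤ a (n - 1) + a n := le_trans (neg_le_abs _ |>.trans_eq' (by ring)) hbound
    have h2 : -(lam + 2) ≤ -(b n) + |a (n - 1) - 1| + |a n - 1| := by nlinarith
    rcases le_or_gt (-(lam + 2)) 0 with h | h
    · rw [max_eq_right h]
      positivity
    · rw [max_eq_left h.le]
      calc -(lam + 2) ≤ -(b n) + |a (n - 1) - 1| + |a n - 1| := h2
        _ ≤ max (-(b n)) 0 + |a (n - 1) - 1| + |a n - 1| := by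
            gcongr; exact le_max_left _ _
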